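/- Let 𝒱 be a join-specification of P, Φ = Γ_𝒱, and define Υ by transfinite recursion: Υ₀(S) = ↓S; Υ_{α+1}(S) = {⋁T : T ∈ 𝒰_Φ, T ⊆ Υ_α(S)}; Υ_λ(S) = ⋃_{β<λ} Υ_β(S) for limit λ; and Υ(S) = Υ_{χ'}(S) where χ' is the smallest regular cardinal at least the radius of 𝒰_Φ. Then Υ(S) ⊆ Φ(S) for all S ⊆ P. -/

import Mathlib

universe u

variable {P : Type u} [PartialOrder P]

/-- The downward closure of a set in a poset. -/
def dcl (S : Set P) : Set P := {q | ∃ s ∈ S, q ≤ s}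

/-- A join-specification: a collection of nonempty subsets each having a join,
containing all singletons. -/
def IsJoinSpec (U : Set (Set P)) : Prop :=
  (∀ S ∈ U, ∃ j, IsLUB S j) ∧ (∀ p : P, {p} ∈ U) ∧ ∅ ∉ U

/-- A `U`-ideal: a down-set closed under joins of members of `U` contained in it. -/
def IsUIdeal (U : Set (Set P)) (I : Set P) : Prop :=
  IsLowerSet I ∧ ∀ S ∈ U, S ⊆ I → ∀ j, IsLUB S j → j ∈ I

/-- The smallest `U`-ideal containing `S`. -/
def GammaU (U : Set (Set P)) (S : Set P) : Set P :=
  ⋂₀ {I | IsUIdeal U I ∧ S ⊆ I}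

/-- A standard closure operator on the powerset of a poset. -/
def IsStdClosure (Γ : Set P → Set P) : Prop :=
  (∀ S, S ⊆ Γ S) ∧ (∀ S T, S ⊆ T → Γ S ⊆ Γ T) ∧ (∀ S, Γ (Γ S) = Γ S) ∧
  (∀ p : P, Γ {p} = {q | q ≤ p})

/-- The join-specification induced by a standard closure operator. -/
def UGamma (Γ : Set P → Set P) : Set (Set P) :=
  {S | (∃ j, IsLUB S j) ∧ ∀ C, Γ C = C → S ⊆ C → ∀ j, IsLUB S j → j ∈ C}

/-- The radius of a join-specification: the smallest cardinal exceeding the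
cardinality of each of its members. -/
noncomputable def radius (U : Set (Set P)) : Cardinal :=
  ⨆ S : U, Order.succ (Cardinal.mk S.1)

/-- The ordinal of the smallest regular cardinal at least the radius of `U`. -/
noncomputable def chiOrd (U : Set (Set P)) : Ordinal :=
  (sInf {c : Cardinal | c.IsRegular ∧ radius U ≤ c}).ord

/-- The transfinite iteration building the smallest `U`-ideal (with downward
closure at successor steps). -/
noncomputable def gammaIter (U : Set (Set P)) (S : Set P) (o : Ordinal) : Set P :=
  Ordinal.limitRecOn o (dcl S)
    (fun _ ih => dcl {p | ∃ T ∈ U, T ⊆ ih ∧ IsLUB T p})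
    (fun o _ ih => ⋃ (b : Ordinal) (h : b < o), ih b h)

/-- The transfinite iteration without downward closure at successor steps. -/
noncomputable def upsIter (U : Set (Set P)) (S : Set P) (o : Ordinal) : Set P :=
  Ordinal.limitRecOn o (dcl S)
    (fun _ ih => {p | ∃ T ∈ U, T ⊆ ih ∧ IsLUB T p})
    (fun o _ ih => ⋃ (b : Ordinal) (h : b < o), ih b h)

/-- The operator `Υ` built from `𝒰_Φ` where `Φ = Γ_𝒱`. -/
noncomputable def Upsilon (V : Set (Set P)) (S : Set P) : Set P :=
  upsIter (UGamma (GammaU V)) S (chiOrd (UGamma (GammaU V)))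

lemma isUIdeal_GammaU (V : Set (Set P)) (S : Set P) : IsUIdeal V (GammaU V S) := by
  constructor
  · intro a b hba ha I hI
    exact hI.1.1 hba (ha I hI)
  · intro T hT hTsub j hj I hI
    exact hI.1.2 T hT (fun x hx => hTsub hx I hI) j hj

lemma subset_GammaU (V : Set (Set P)) (S : Set P) : S ⊆ GammaU V S :=
  fun x hx I hI => hI.2 hx

lemma GammaU_idem (V : Set (Set P)) (S : Set P) :
    GammaU V (GammaU V S) = GammaU V S := by
  apply Set.Subset.antisymm
  · exact Set.sInter_subset_of_mem ⟨isUIdeal_GammaU V S, Set.Subset.rfl⟩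
  · exact subset_GammaU V _

lemma upsIter_subset (V : Set (Set P)) (S : Set P) (o : Ordinal) :
    upsIter (UGamma (GammaU V)) S o ⊆ GammaU V S := by
  induction o using Ordinal.limitRecOn with
  | zero =>
    rw [upsIter, Ordinal.limitRecOn_zero]
    rintro x ⟨s, hs, hxs⟩
    exact (isUIdeal_GammaU V S).1 hxs (subset_GammaU V S hs)
  | add_one o ih =>
    rw [upsIter, Ordinal.limitRecOn_add_one]
    rintro p ⟨T, hT, hTsub, hlub⟩
    exact hT.2 (GammaU V S) (GammaU_idem V S) (fun x hx => ih (hTsub hx)) p hlub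
  | limit o ho ih =>
    rw [upsIter, Ordinal.limitRecOn_limit _ _ _ _ ho]
    rintro x hx
    simp only [Set.mem_iUnion] at hx
    obtain ⟨b, hb, hxb⟩ := hx
    exact ih b hb hxb

theorem upsilon_subset_phi
    (V : Set (Set P)) (hV : IsJoinSpec V) (S : Set P) :
    Upsilon V S ⊆ GammaU V S :=
  upsIter_subset V S _
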